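/- For n > 4, the virtual projection S_n → S_{n-1} is unique; equivalently, the only subset K of S_n that is invariant under conjugation by S_{n-1} and meets every left coset of S_{n-1} in exactly one element is K = {e} ∪ {(i n) : 1 ≤ i ≤ n-1}. -/

import Mathlib

private lemma exists_ne_four {m : ℕ} (hm : 4 < m) (a b c d : Fin m) :
    ∃ z : Fin m, z ≠ a ∧ z ≠ b ∧ z ≠ c ∧ z ≠ d := by
  by_contra hcon
  push_neg at hcon
  have hsub : (Finset.univ : Finset (Fin m)) ⊆ {a, b, c, d} := by
    intro z _
    simp only [Finset.mem_insert, Finset.mem_singleton]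
    have := hcon z
    tauto
  have hcard := Finset.card_le_card hsub
  simp only [Finset.card_univ, Fintype.card_fin] at hcard
  have h1 : ({a, b, c, d} : Finset (Fin m)).card ≤ ({b, c, d} : Finset (Fin m)).card + 1 :=
    Finset.card_insert_le _ _
  have h2 : ({b, c, d} : Finset (Fin m)).card ≤ ({c, d} : Finset (Fin m)).card + 1 :=
    Finset.card_insert_le _ _
  have h3 : ({c, d} : Finset (Fin m)).card ≤ ({d} : Finset (Fin m)).card + 1 :=
    Finset.card_insert_le _ _
  have h4 : ({d} : Finset (Fin m)).card = 1 := Finset.card_singleton _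
  omega

theorem virtual_projection_symm_unique (n : ℕ) (hn : 4 < n + 1)
    (K : Set (Equiv.Perm (Fin (n + 1))))
    (hinv : ∀ h ∈ MulAction.stabilizer (Equiv.Perm (Fin (n + 1))) (Fin.last n),
      ∀ k ∈ K, h * k * h⁻¹ ∈ K)
    (htrans : ∀ g : Equiv.Perm (Fin (n + 1)), ∃! k : Equiv.Perm (Fin (n + 1)),
      k ∈ K ∧ ∃ h ∈ MulAction.stabilizer (Equiv.Perm (Fin (n + 1))) (Fin.last n),
        g = h * k) :
    K = {σ : Equiv.Perm (Fin (n + 1)) |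
      σ = 1 ∨ ∃ i : Fin (n + 1), i ≠ Fin.last n ∧ σ = Equiv.swap i (Fin.last n)} := by
  set L := Fin.last n with hLdef
  have hmem : ∀ h : Equiv.Perm (Fin (n + 1)),
      h ∈ MulAction.stabilizer (Equiv.Perm (Fin (n + 1))) L ↔ h L = L := by
    intro h
    rw [MulAction.mem_stabilizer_iff]
    rfl
  -- uniqueness: elements of K are determined by k⁻¹ L
  have uniq : ∀ k ∈ K, ∀ k' ∈ K, k⁻¹ L = k'⁻¹ L → k = k' := by
    intro k hk k' hk' hval
    obtain ⟨m, _, hu⟩ := htrans k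
    have h1 : k = m := hu k ⟨hk, 1, one_mem _, by simp⟩
    have h2 : k' = m := by
      refine hu k' ⟨hk', k * k'⁻¹, ?_, by group⟩
      rw [hmem]
      simp [Equiv.Perm.mul_apply, ← hval]
    rw [h1, h2]
  -- existence: every value is attained
  have exist : ∀ v : Fin (n + 1), ∃ k ∈ K, k⁻¹ L = v := by
    intro v
    obtain ⟨k, ⟨hk, h, hh, hg⟩, _⟩ := htrans (Equiv.swap v L)
    refine ⟨k, hk, ?_⟩
    have hk' : k = h⁻¹ * Equiv.swap v L := by rw [hg]; group
    rw [hmem] at hh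
    have hhL : h⁻¹ L = L := by
      conv_lhs => rw [← hh]
      simp
    rw [hk']
    simp [Equiv.Perm.mul_apply, hhL, hh]
  -- commuting principle
  have hcomm : ∀ k ∈ K, ∀ h : Equiv.Perm (Fin (n + 1)),
      h ∈ MulAction.stabilizer (Equiv.Perm (Fin (n + 1))) L → h (k⁻¹ L) = k⁻¹ L →
      ∀ x, h (k x) = k (h x) := by
    intro k hk h hh hfix x
    have h1 : h * k * h⁻¹ ∈ K := hinv h hh k hk
    have hhL : h L = L := (hmem h).mp hh
    have hhL' : h⁻¹ L = L := by
      conv_lhs => rw [← hhL]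
      simp
    have hval : (h * k * h⁻¹)⁻¹ L = k⁻¹ L := by
      simp [Equiv.Perm.mul_apply, hhL', hfix]
      exact hfix
    have h2 : h * k * h⁻¹ = k := uniq _ h1 _ hk hval
    have h3 := congrArg (fun σ : Equiv.Perm (Fin (n + 1)) => σ (h x)) h2
    simpa [Equiv.Perm.mul_apply] using h3
  -- value L forces k = 1
  have claim1 : ∀ k ∈ K, k⁻¹ L = L → k = 1 := by
    intro k hk hv
    have hkL : k L = L := by
      conv_lhs => rw [← hv]
      simp
    apply Equiv.ext
    intro x
    simp only [Equiv.Perm.one_apply]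
    by_contra hne
    by_cases hxL : x = L
    · exact hne (by rw [hxL, hkL])
    · have hkxL : k x ≠ L := by
        intro h
        exact hxL (k.injective (by rw [h, hkL]))
      obtain ⟨z, hz1, hz2, hz3, _⟩ := exists_ne_four hn (k x) x L L
      have hh : Equiv.swap (k x) z ∈ MulAction.stabilizer (Equiv.Perm (Fin (n + 1))) L := by
        rw [hmem]
        exact Equiv.swap_apply_of_ne_of_ne (Ne.symm hkxL) (Ne.symm hz3)
      have hfix : Equiv.swap (k x) z (k⁻¹ L) = k⁻¹ L := by
        rw [hv]
        exact Equiv.swap_apply_of_ne_of_ne (Ne.symm hkxL) (Ne.symm hz3)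
      have := hcomm k hk _ hh hfix x
      rw [Equiv.swap_apply_left] at this
      rw [Equiv.swap_apply_of_ne_of_ne (fun h => hne h.symm) (Ne.symm hz2)] at this
      exact hz1 this
  -- value v ≠ L forces k = swap v L
  have claim2 : ∀ k ∈ K, ∀ v : Fin (n + 1), v ≠ L → k⁻¹ L = v → k = Equiv.swap v L := by
    intro k hk v hvL hv
    have hkv : k v = L := by
      conv_lhs => rw [← hv]
      simp
    -- commuting with perms fixing v and L
    have hcom : ∀ h : Equiv.Perm (Fin (n + 1)), h L = L → h v = v →
        ∀ x, h (k x) = k (h x) := by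
      intro h hhL hhv x
      exact hcomm k hk h ((hmem h).mpr hhL) (by rw [hv]; exact hhv) x
    -- k L = v
    have hkL : k L = v := by
      by_contra hne
      have hkLL : k L ≠ L := by
        intro h
        exact hvL (k.injective (by rw [hkv, h]))
      have hkLv : k L ≠ v := hne
      obtain ⟨z, hz1, hz2, hz3, _⟩ := exists_ne_four hn (k L) v L L
      have := hcom (Equiv.swap (k L) z)
        (Equiv.swap_apply_of_ne_of_ne (Ne.symm hkLL) (Ne.symm hz3))
        (Equiv.swap_apply_of_ne_of_ne (Ne.symm hkLv) (Ne.symm hz2)) L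
      rw [Equiv.swap_apply_left,
        Equiv.swap_apply_of_ne_of_ne (Ne.symm hkLL) (Ne.symm hz3)] at this
      exact hz1 this
    -- other points are fixed
    have hfixpt : ∀ x : Fin (n + 1), x ≠ v → x ≠ L → k x = x := by
      intro x hxv hxL
      by_contra hne
      have hkxL : k x ≠ L := by
        intro h
        exact hxv (k.injective (by rw [h, hkv]))
      have hkxv : k x ≠ v := by
        intro h
        exact hxL (k.injective (by rw [h, hkL]))
      obtain ⟨z, hz1, hz2, hz3, hz4⟩ := exists_ne_four hn (k x) x v L
      have := hcom (Equiv.swap (k x) z)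
        (Equiv.swap_apply_of_ne_of_ne (Ne.symm hkxL) (Ne.symm hz4))
        (Equiv.swap_apply_of_ne_of_ne (Ne.symm hkxv) (Ne.symm hz3)) x
      rw [Equiv.swap_apply_left,
        Equiv.swap_apply_of_ne_of_ne (fun h => hne h.symm) (Ne.symm hz2)] at this
      exact hz1 this
    apply Equiv.ext
    intro x
    by_cases hxv : x = v
    · rw [hxv, hkv, Equiv.swap_apply_left]
    · by_cases hxL : x = L
      · rw [hxL, hkL, Equiv.swap_apply_right]
      · rw [hfixpt x hxv hxL, Equiv.swap_apply_of_ne_of_ne hxv hxL]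
  ext σ
  simp only [Set.mem_setOf_eq]
  constructor
  · intro hσ
    by_cases h : σ⁻¹ L = L
    · exact Or.inl (claim1 σ hσ h)
    · exact Or.inr ⟨σ⁻¹ L, h, claim2 σ hσ _ h rfl⟩
  · rintro (rfl | ⟨i, hiL, rfl⟩)
    · obtain ⟨k, hk, hkv⟩ := exist L
      rw [← claim1 k hk hkv]
      exact hk
    · obtain ⟨k, hk, hkv⟩ := exist i
      rw [← claim2 k hk i hiL hkv]
      exact hk
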